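/- For every r with 1/2 < r ≤ 1 and every x > 0: ∫_{1/(4x)}^∞ z^{−2r} cos(2πxz) dz ≥ −(4^{2r}/π) · x^{2r−1}. -/

import Mathlib

open MeasureTheory
open scoped ENNReal NNReal

/-- Lower bound for the oscillating tail integral: for
`1/2 < r ≤ 1` and `x > 0`,
`∫_{1/(4x)}^∞ z^{−2r} cos(2πxz) dz ≥ −(4^{2r}/π) x^{2r−1}`. -/
theorem stmt17 (r : ℝ) (hr1 : 1/2 < r) (hr2 : r ≤ 1) (x : ℝ) (hx : 0 < x) :
    -((4 : ℝ) ^ (2 * r) / Real.pi) * x ^ (2 * r - 1)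
      ≤ ∫ z in Set.Ioi (1 / (4 * x)), z ^ (-(2 * r)) * Real.cos (2 * Real.pi * x * z) := by
  have hπ : (0:ℝ) < Real.pi := Real.pi_pos
  set a : ℝ := 1/(4*x) with ha_def
  have ha : 0 < a := by positivity
  have hlt : -(2*r) < -1 := by linarith
  have hlt2 : -(2*r) - 1 < -1 := by linarith
  set f : ℝ → ℝ := fun z => z ^ (-(2*r)) * Real.cos (2*Real.pi*x*z) with hf_def
  set h : ℝ → ℝ := fun z => 2*r * z ^ (-(2*r)-1) * Real.sin (2*Real.pi*x*z) / (2*Real.pi*x)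
    with hh_def
  set g : ℝ → ℝ := fun z => z ^ (-(2*r)) * Real.sin (2*Real.pi*x*z) / (2*Real.pi*x) with hg_def
  set B : ℝ → ℝ := fun z => 2*r * z ^ (-(2*r)-1) / (2*Real.pi*x) with hB_def
  have hcont1 : ∀ p : ℝ, ContinuousOn (fun z : ℝ => z ^ p) (Set.Ioi a) := fun p z hz =>
    (Real.continuousAt_rpow_const z p (Or.inl (ha.trans hz).ne')).continuousWithinAt
  have hI1 : IntegrableOn (fun z : ℝ => z ^ (-(2*r))) (Set.Ioi a) :=
    integrableOn_Ioi_rpow_of_lt hlt ha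
  have hI2 : IntegrableOn (fun z : ℝ => z ^ (-(2*r) - 1)) (Set.Ioi a) :=
    integrableOn_Ioi_rpow_of_lt hlt2 ha
  have hf_int : IntegrableOn f (Set.Ioi a) := by
    refine hI1.mono' ?_ ?_
    · exact ((hcont1 _).mul (by fun_prop)).aestronglyMeasurable measurableSet_Ioi
    · filter_upwards [ae_restrict_mem measurableSet_Ioi] with z hz
      have hz0 : 0 < z := ha.trans hz
      rw [hf_def]
      simp only [norm_mul, Real.norm_eq_abs, abs_of_pos (Real.rpow_pos_of_pos hz0 _)]
      calc z ^ (-(2*r)) * |Real.cos (2*Real.pi*x*z)| ≤ z ^ (-(2*r)) * 1 := by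
            gcongr
            exact Real.abs_cos_le_one _
        _ = z ^ (-(2*r)) := mul_one _
  have hB_int : IntegrableOn B (Set.Ioi a) := by
    have hBeq : B = fun z : ℝ => (2*r/(2*Real.pi*x)) * z ^ (-(2*r)-1) := by
      ext z; rw [hB_def]; ring
    rw [hBeq]
    exact hI2.const_mul _
  have hh_int : IntegrableOn h (Set.Ioi a) := by
    refine hB_int.mono' ?_ ?_
    · exact ((((hcont1 _).const_smul (2*r)).mul (by fun_prop)).div_const
        _).aestronglyMeasurable measurableSet_Ioi
    · filter_upwards [ae_restrict_mem measurableSet_Ioi] with z hz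
      have hz0 : 0 < z := ha.trans hz
      have h1 : 0 < z ^ (-(2*r)-1) := Real.rpow_pos_of_pos hz0 _
      rw [hh_def, hB_def]
      simp only [Real.norm_eq_abs, abs_div, abs_mul,
        abs_of_pos (by linarith : (0:ℝ) < 2*r), abs_of_pos h1,
        abs_of_pos (by positivity : (0:ℝ) < 2*Real.pi*x)]
      calc 2*r * z ^ (-(2*r)-1) * |Real.sin (2*Real.pi*x*z)| / (2*Real.pi*x)
          ≤ 2*r * z ^ (-(2*r)-1) * 1 / (2*Real.pi*x) := by
            gcongr
            exact Real.abs_sin_le_one _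
        _ = 2*r * z ^ (-(2*r)-1) / (2*Real.pi*x) := by ring
  have hderiv : ∀ z ∈ Set.Ici a, HasDerivAt g (f z - h z) z := by
    intro z hz
    have hz0 : 0 < z := lt_of_lt_of_le ha hz
    have d1 : HasDerivAt (fun z : ℝ => z ^ (-(2*r))) (-(2*r) * z ^ (-(2*r)-1)) z :=
      Real.hasDerivAt_rpow_const (Or.inl hz0.ne')
    have d2 : HasDerivAt (fun z : ℝ => Real.sin (2*Real.pi*x*z))
        (Real.cos (2*Real.pi*x*z) * (2*Real.pi*x)) z := by
      have := (Real.hasDerivAt_sin (2*Real.pi*x*z)).comp z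
        ((hasDerivAt_id z).const_mul (2*Real.pi*x))
      exact this.congr_deriv (by simp)
    have := (d1.mul d2).div_const (2*Real.pi*x)
    refine this.congr_deriv ?_
    rw [hf_def, hh_def]
    have h2πx : (2*Real.pi*x) ≠ 0 := by positivity
    field_simp
    ring
  have hcontg : ContinuousWithinAt g (Set.Ici a) a :=
    ((hderiv a Set.self_mem_Ici).continuousAt).continuousWithinAt
  have htend : Filter.Tendsto g Filter.atTop (nhds 0) := by
    apply squeeze_zero_norm' (a := fun z : ℝ => z ^ (-(2*r)) / (2*Real.pi*x))
    · filter_upwards [Filter.eventually_gt_atTop (0:ℝ)] with z hz0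
      rw [hg_def]
      simp only [Real.norm_eq_abs, abs_div, abs_mul,
        abs_of_pos (Real.rpow_pos_of_pos hz0 (-(2*r))),
        abs_of_pos (by positivity : (0:ℝ) < 2*Real.pi*x)]
      gcongr
      exact mul_le_of_le_one_right (Real.rpow_pos_of_pos hz0 _).le (Real.abs_sin_le_one _)
    · simpa using (tendsto_rpow_neg_atTop (by linarith : (0:ℝ) < 2*r)).div_const (2*Real.pi*x)
  have hFTC : ∫ z in Set.Ioi a, (f z - h z) = 0 - g a :=
    integral_Ioi_of_hasDerivAt_of_tendsto hcontg (fun z hz => hderiv z (Set.Ioi_subset_Ici_self hz))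
      (hf_int.sub hh_int) htend
  have hga : g a = a ^ (-(2*r)) / (2*Real.pi*x) := by
    have h2 : 2*Real.pi*x*a = Real.pi/2 := by rw [ha_def]; field_simp; ring
    show a ^ (-(2*r)) * Real.sin (2*Real.pi*x*a) / (2*Real.pi*x) = _
    rw [h2, Real.sin_pi_div_two, mul_one]
  have hsub : (∫ z in Set.Ioi a, f z) - ∫ z in Set.Ioi a, h z = 0 - g a := by
    rw [← integral_sub hf_int hh_int]; exact hFTC
  have habs : ‖∫ z in Set.Ioi a, h z‖ ≤ a ^ (-(2*r)) / (2*Real.pi*x) := by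
    have hIB : ∫ z in Set.Ioi a, B z = a ^ (-(2*r)) / (2*Real.pi*x) := by
      have h3 : ∫ z in Set.Ioi a, z ^ (-(2*r)-1) = -a ^ (-(2*r)-1+1) / (-(2*r)-1+1) :=
        integral_Ioi_rpow_of_lt hlt2 ha
      have hBeq : B = fun z : ℝ => (2*r/(2*Real.pi*x)) * z ^ (-(2*r)-1) := by
        ext z; rw [hB_def]; ring
      rw [hBeq, integral_const_mul, h3]
      have he : (-(2*r)-1+1 : ℝ) = -(2*r) := by ring
      rw [he]
      have hr0 : (2*r : ℝ) ≠ 0 := by positivity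
      field_simp
    rw [← hIB]
    refine norm_integral_le_of_norm_le hB_int ?_
    filter_upwards [ae_restrict_mem measurableSet_Ioi] with z hz
    have hz0 : 0 < z := ha.trans hz
    have h1 : 0 < z ^ (-(2*r)-1) := Real.rpow_pos_of_pos hz0 _
    rw [hh_def, hB_def]
    simp only [Real.norm_eq_abs, abs_div, abs_mul,
      abs_of_pos (by linarith : (0:ℝ) < 2*r), abs_of_pos h1,
      abs_of_pos (by positivity : (0:ℝ) < 2*Real.pi*x)]
    calc 2*r * z ^ (-(2*r)-1) * |Real.sin (2*Real.pi*x*z)| / (2*Real.pi*x)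
        ≤ 2*r * z ^ (-(2*r)-1) * 1 / (2*Real.pi*x) := by
          gcongr
          exact Real.abs_sin_le_one _
      _ = 2*r * z ^ (-(2*r)-1) / (2*Real.pi*x) := by ring
  rw [Real.norm_eq_abs] at habs
  have hhlow : -(a ^ (-(2*r)) / (2*Real.pi*x)) ≤ ∫ z in Set.Ioi a, h z :=
    neg_le_of_abs_le habs
  have hkey : a ^ (-(2*r)) = 4 ^ (2*r) * x ^ (2*r) := by
    rw [ha_def, one_div, Real.rpow_neg (by positivity), Real.inv_rpow (by positivity), inv_inv,
      Real.mul_rpow (by norm_num) hx.le]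
  have hx1 : x ^ (2*r-1) = x ^ (2*r) / x := by
    rw [Real.rpow_sub hx, Real.rpow_one]
  have hEq : -((4 : ℝ) ^ (2 * r) / Real.pi) * x ^ (2 * r - 1)
      = -(a ^ (-(2*r)) / (2*Real.pi*x)) + (0 - g a) := by
    rw [hkey, hga, hkey, hx1]
    field_simp
    ring
  rw [hEq]
  have : (∫ z in Set.Ioi a, f z) = (0 - g a) + ∫ z in Set.Ioi a, h z := by linarith
  rw [this]
  linarith
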